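/- arXiv:1001.0330 — 2 statements merged into one kernel-verified Lean document; each statement's English description precedes it below -/
import Mathlib

section
/- For every finite simple graph G with at least one edge, the one-dimensional resolution coefficient equals the bandwidth: re₁(G) = bw(G). -/
open Real

noncomputable section

/-- The Euclidean plane. -/
abbrev Pt := EuclideanSpace ℝ (Fin 2)

variable {V : Type*} [Fintype V]

/-- A representation is non-edge-degenerate if endpoints of every edge are mapped
to distinct points. -/
def NED (G : SimpleGraph V) (ρ : V → Pt) : Prop := ∀ ⦃u v⦄, G.Adj u v → ρ u ≠ ρ v

/-- Maximum edge length of a representation. -/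
def maxE (G : SimpleGraph V) (ρ : V → Pt) : ℝ :=
  sSup {d | ∃ u v, G.Adj u v ∧ d = dist (ρ u) (ρ v)}

/-- Minimum edge length of a representation. -/
def minE (G : SimpleGraph V) (ρ : V → Pt) : ℝ :=
  sInf {d | ∃ u v, G.Adj u v ∧ d = dist (ρ u) (ρ v)}

/-- Maximum distance between images of two distinct vertices. -/
def maxP (ρ : V → Pt) : ℝ := sSup {d | ∃ u v : V, u ≠ v ∧ d = dist (ρ u) (ρ v)}

/-- Minimum distance between images of two distinct vertices. -/
def minP (ρ : V → Pt) : ℝ := sInf {d | ∃ u v : V, u ≠ v ∧ d = dist (ρ u) (ρ v)}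

/-- The dilation coefficient of a graph. -/
def dc (G : SimpleGraph V) : ℝ :=
  sInf {r | ∃ ρ : V → Pt, NED G ρ ∧ r = maxE G ρ / minE G ρ}

/-- The plane-width of a graph. -/
def pw (G : SimpleGraph V) : ℝ :=
  sInf {r | ∃ ρ : V → Pt, NED G ρ ∧ r = maxP ρ / minE G ρ}

/-- The resolution coefficient of a graph. -/
def re (G : SimpleGraph V) : ℝ :=
  sInf {r | ∃ ρ : V → Pt, Function.Injective ρ ∧ r = maxE G ρ / minP ρ}

/-- One-dimensional non-edge-degeneracy. -/
def NED1 (G : SimpleGraph V) (ρ : V → ℝ) : Prop := ∀ ⦃u v⦄, G.Adj u v → ρ u ≠ ρ v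

def maxE1 (G : SimpleGraph V) (ρ : V → ℝ) : ℝ :=
  sSup {d | ∃ u v, G.Adj u v ∧ d = |ρ u - ρ v|}

def minE1 (G : SimpleGraph V) (ρ : V → ℝ) : ℝ :=
  sInf {d | ∃ u v, G.Adj u v ∧ d = |ρ u - ρ v|}

def maxP1 (ρ : V → ℝ) : ℝ := sSup {d | ∃ u v : V, u ≠ v ∧ d = |ρ u - ρ v|}

def minP1 (ρ : V → ℝ) : ℝ := sInf {d | ∃ u v : V, u ≠ v ∧ d = |ρ u - ρ v|}

/-- The one-dimensional dilation coefficient. -/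
def dc1 (G : SimpleGraph V) : ℝ :=
  sInf {r | ∃ ρ : V → ℝ, NED1 G ρ ∧ r = maxE1 G ρ / minE1 G ρ}

/-- The one-dimensional plane-width ("line-width"). -/
def pw1 (G : SimpleGraph V) : ℝ :=
  sInf {r | ∃ ρ : V → ℝ, NED1 G ρ ∧ r = maxP1 ρ / minE1 G ρ}

/-- The one-dimensional resolution coefficient. -/
def re1 (G : SimpleGraph V) : ℝ :=
  sInf {r | ∃ ρ : V → ℝ, Function.Injective ρ ∧ r = maxE1 G ρ / minP1 ρ}

/-- The bandwidth of a graph: minimum over bijections `φ : V ≃ {1,…,n}` of the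
maximum of `|φ u - φ v|` over edges `uv`. -/
def bw (G : SimpleGraph V) : ℕ :=
  sInf {k : ℕ | ∃ φ : V ≃ Fin (Fintype.card V),
    ∀ u v, G.Adj u v → (((φ u : ℕ) : ℤ) - ((φ v : ℕ) : ℤ)).natAbs ≤ k}

lemma edgePairs_finite (G : SimpleGraph V) (ρ : V → ℝ) :
    {d | ∃ u v, G.Adj u v ∧ d = |ρ u - ρ v|}.Finite := by
  apply Set.Finite.subset (Set.finite_range fun p : V × V => |ρ p.1 - ρ p.2|)
  rintro d ⟨u, v, _, rfl⟩; exact ⟨(u, v), rfl⟩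

lemma pairs_finite (ρ : V → ℝ) :
    {d | ∃ u v : V, u ≠ v ∧ d = |ρ u - ρ v|}.Finite := by
  apply Set.Finite.subset (Set.finite_range fun p : V × V => |ρ p.1 - ρ p.2|)
  rintro d ⟨u, v, _, rfl⟩; exact ⟨(u, v), rfl⟩

lemma lowerBound (G : SimpleGraph V)
    (hG : ∃ u v : V, G.Adj u v) (ρ : V → ℝ) (hinj : Function.Injective ρ) :
    (bw G : ℝ) * minP1 ρ ≤ maxE1 G ρ := by
  classical
  obtain ⟨u0, v0, h0⟩ := hG
  letI : LinearOrder V := LinearOrder.lift' ρ hinj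
  have hle : ∀ a b : V, a ≤ b ↔ ρ a ≤ ρ b := fun a b => Iff.rfl
  have hlt : ∀ a b : V, a < b ↔ ρ a < ρ b := by
    intro a b
    rw [lt_iff_le_not_ge, lt_iff_le_not_ge, hle, hle]
  let e : Fin (Fintype.card V) ≃o V := monoEquivOfFin V rfl
  set m := minP1 ρ with hm
  have hmle : ∀ u v : V, u ≠ v → m ≤ |ρ u - ρ v| := fun u v h =>
    csInf_le (pairs_finite ρ).bddBelow ⟨u, v, h, rfl⟩
  have hmpos : 0 < m := by
    have hSne : {d | ∃ u v : V, u ≠ v ∧ d = |ρ u - ρ v|}.Nonempty :=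
      ⟨_, u0, v0, G.ne_of_adj h0, rfl⟩
    have hmem := hSne.csInf_mem (pairs_finite (V := V) ρ)
    obtain ⟨u, v, huv, hd⟩ := hmem
    have heq : minP1 ρ = |ρ u - ρ v| := hd
    rw [hm, heq]
    exact abs_pos.2 (sub_ne_zero.2 fun h => huv (hinj h))
  have gap : ∀ d : ℕ, ∀ i j : Fin (Fintype.card V), (j : ℕ) = (i : ℕ) + d →
      (d : ℝ) * m ≤ ρ (e j) - ρ (e i) := by
    intro d
    induction d with
    | zero =>
      intro i j hij
      have : i = j := Fin.ext (by omega)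
      simp [this]
    | succ d ih =>
      intro i j hij
      have hj' : (i : ℕ) + d < Fintype.card V := by
        have := j.isLt; omega
      set j' : Fin (Fintype.card V) := ⟨(i : ℕ) + d, hj'⟩ with hj'def
      have h1 := ih i j' rfl
      have hltj : j' < j := by
        rw [Fin.lt_def]; simp [hj'def]; omega
      have hρlt : ρ (e j') < ρ (e j) := (hlt _ _).1 (e.strictMono hltj)
      have hne : e j' ≠ e j := fun h => absurd (congrArg ρ h) (ne_of_lt hρlt)
      have h2 : m ≤ ρ (e j) - ρ (e j') := by
        have := hmle _ _ hne.symm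
        rwa [abs_of_nonneg (by linarith)] at this
      push_cast
      linarith
  set φ : V ≃ Fin (Fintype.card V) := e.toEquiv.symm with hφdef
  have heφ : ∀ u : V, e (φ u) = u := fun u => e.toEquiv.apply_symm_apply u
  have habs : ∀ u v : V,
      (((((φ u : ℕ) : ℤ) - ((φ v : ℕ) : ℤ)).natAbs : ℕ) : ℝ) * m ≤ |ρ u - ρ v| := by
    have key : ∀ u v : V, (φ v : ℕ) ≤ (φ u : ℕ) →
        (((((φ u : ℕ) : ℤ) - ((φ v : ℕ) : ℤ)).natAbs : ℕ) : ℝ) * m ≤ |ρ u - ρ v| := by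
      intro u v h
      have hd : (φ u : ℕ) = (φ v : ℕ) + ((φ u : ℕ) - (φ v : ℕ)) := by omega
      have hgap := gap _ (φ v) (φ u) hd
      rw [heφ, heφ] at hgap
      have hnat : ((((φ u : ℕ) : ℤ) - ((φ v : ℕ) : ℤ)).natAbs : ℕ)
          = (φ u : ℕ) - (φ v : ℕ) := by omega
      rw [hnat]
      calc ((((φ u : ℕ) - (φ v : ℕ) : ℕ)) : ℝ) * m ≤ ρ u - ρ v := hgap
        _ ≤ |ρ u - ρ v| := le_abs_self _
    intro u v
    rcases le_total (φ v : ℕ) (φ u : ℕ) with h | h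
    · exact key u v h
    · have := key v u h
      rw [abs_sub_comm (ρ v)] at this
      have hsw : ((((φ v : ℕ) : ℤ) - ((φ u : ℕ) : ℤ)).natAbs : ℕ)
          = ((((φ u : ℕ) : ℤ) - ((φ v : ℕ) : ℤ)).natAbs : ℕ) := by omega
      rwa [hsw] at this
  obtain ⟨u, v, huv, hbw⟩ : ∃ u v, G.Adj u v ∧
      bw G ≤ ((((φ u : ℕ) : ℤ) - ((φ v : ℕ) : ℤ)).natAbs : ℕ) := by
    by_contra hcon
    push_neg at hcon
    have h1 : 1 ≤ bw G := by
      have := hcon u0 v0 h0; omega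
    have hmem : bw G - 1 ∈ {k : ℕ | ∃ ψ : V ≃ Fin (Fintype.card V),
        ∀ u v, G.Adj u v → (((ψ u : ℕ) : ℤ) - ((ψ v : ℕ) : ℤ)).natAbs ≤ k} :=
      ⟨φ, fun u v huv => by have := hcon u v huv; omega⟩
    have : bw G ≤ bw G - 1 := Nat.sInf_le hmem
    omega
  have hEdge : |ρ u - ρ v| ≤ maxE1 G ρ :=
    le_csSup (edgePairs_finite G ρ).bddAbove ⟨u, v, huv, rfl⟩
  have hcast : ((bw G : ℕ) : ℝ) ≤
      (((((φ u : ℕ) : ℤ) - ((φ v : ℕ) : ℤ)).natAbs : ℕ) : ℝ) := Nat.cast_le.2 hbw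
  calc (bw G : ℝ) * m ≤ (((((φ u : ℕ) : ℤ) - ((φ v : ℕ) : ℤ)).natAbs : ℕ) : ℝ) * m :=
        mul_le_mul_of_nonneg_right hcast hmpos.le
    _ ≤ |ρ u - ρ v| := habs u v
    _ ≤ maxE1 G ρ := hEdge

lemma minP1_pos (ρ : V → ℝ) (hinj : Function.Injective ρ)
    (hne : ∃ u v : V, u ≠ v) : 0 < minP1 ρ := by
  obtain ⟨u0, v0, h0⟩ := hne
  have hSne : {d | ∃ u v : V, u ≠ v ∧ d = |ρ u - ρ v|}.Nonempty :=
    ⟨_, u0, v0, h0, rfl⟩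
  have hmem := hSne.csInf_mem (pairs_finite (V := V) ρ)
  obtain ⟨u, v, huv, hd⟩ := hmem
  rw [minP1, hd]
  exact abs_pos.2 (sub_ne_zero.2 fun h => huv (hinj h))

/-- The one-dimensional resolution coefficient equals the bandwidth. -/
theorem stmt_10 {V : Type*} [Fintype V] (G : SimpleGraph V) (hG : G.edgeSet.Nonempty) :
    re1 G = (bw G : ℝ) := by
  classical
  obtain ⟨e0, he0⟩ := hG
  obtain ⟨u0, v0, h0⟩ : ∃ u v, G.Adj u v := by
    induction e0 using Sym2.ind with
    | _ u v => exact ⟨u, v, he0⟩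
  have hAdj : ∃ u v : V, G.Adj u v := ⟨u0, v0, h0⟩
  have hbwne : {k : ℕ | ∃ φ : V ≃ Fin (Fintype.card V),
      ∀ u v, G.Adj u v → (((φ u : ℕ) : ℤ) - ((φ v : ℕ) : ℤ)).natAbs ≤ k}.Nonempty := by
    refine ⟨Fintype.card V, Fintype.equivFin V, fun u v _ => ?_⟩
    have h1 := (Fintype.equivFin V u).isLt
    have h2 := (Fintype.equivFin V v).isLt
    omega
  obtain ⟨φ, hφ⟩ := Nat.sInf_mem hbwne
  set ρ0 : V → ℝ := fun v => ((φ v : ℕ) : ℝ) with hρ0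
  have hinj0 : Function.Injective ρ0 := by
    intro a b hab
    have : (φ a : ℕ) = (φ b : ℕ) := Nat.cast_injective hab
    exact φ.injective (Fin.ext this)
  have habs0 : ∀ u v : V, |ρ0 u - ρ0 v|
      = (((((φ u : ℕ) : ℤ) - ((φ v : ℕ) : ℤ)).natAbs : ℕ) : ℝ) := by
    intro u v
    rw [Nat.cast_natAbs]
    push_cast
    ring_nf
    simp [hρ0]
  have hminP : 1 ≤ minP1 ρ0 := by
    have hSne : {d | ∃ u v : V, u ≠ v ∧ d = |ρ0 u - ρ0 v|}.Nonempty :=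
      ⟨_, u0, v0, G.ne_of_adj h0, rfl⟩
    apply le_csInf hSne
    rintro d ⟨u, v, huv, rfl⟩
    rw [habs0]
    have hne : (φ u : ℕ) ≠ (φ v : ℕ) := fun h => huv (φ.injective (Fin.ext h))
    have : 1 ≤ ((((φ u : ℕ) : ℤ) - ((φ v : ℕ) : ℤ)).natAbs : ℕ) := by omega
    exact_mod_cast this
  have hmaxE : maxE1 G ρ0 ≤ (bw G : ℝ) := by
    have hSne : {d | ∃ u v : V, G.Adj u v ∧ d = |ρ0 u - ρ0 v|}.Nonempty :=
      ⟨_, u0, v0, h0, rfl⟩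
    apply csSup_le hSne
    rintro d ⟨u, v, huv, rfl⟩
    rw [habs0]
    have h : (((φ u : ℕ) : ℤ) - ((φ v : ℕ) : ℤ)).natAbs ≤ bw G := hφ u v huv
    exact_mod_cast h
  have hm0pos : 0 < minP1 ρ0 := lt_of_lt_of_le one_pos hminP
  have hub : maxE1 G ρ0 / minP1 ρ0 ≤ (bw G : ℝ) := by
    rw [div_le_iff₀ hm0pos]
    calc maxE1 G ρ0 ≤ (bw G : ℝ) := hmaxE
      _ = (bw G : ℝ) * 1 := (mul_one _).symm
      _ ≤ (bw G : ℝ) * minP1 ρ0 :=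
        mul_le_mul_of_nonneg_left hminP (Nat.cast_nonneg _)
  have hlb0 : (bw G : ℝ) ≤ maxE1 G ρ0 / minP1 ρ0 := by
    rw [le_div_iff₀ hm0pos]
    exact lowerBound G hAdj ρ0 hinj0
  have hr0 : maxE1 G ρ0 / minP1 ρ0 = (bw G : ℝ) := le_antisymm hub hlb0
  have hmem : (bw G : ℝ) ∈ {r | ∃ ρ : V → ℝ,
      Function.Injective ρ ∧ r = maxE1 G ρ / minP1 ρ} :=
    ⟨ρ0, hinj0, hr0.symm⟩
  have hlb : ∀ r ∈ {r | ∃ ρ : V → ℝ,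
      Function.Injective ρ ∧ r = maxE1 G ρ / minP1 ρ}, (bw G : ℝ) ≤ r := by
    rintro r ⟨ρ, hinj, rfl⟩
    have hmpos : 0 < minP1 ρ :=
      minP1_pos ρ hinj ⟨u0, v0, G.ne_of_adj h0⟩
    rw [le_div_iff₀ hmpos]
    exact lowerBound G hAdj ρ hinj
  exact le_antisymm (csInf_le ⟨(bw G : ℝ), hlb⟩ hmem) (le_csInf ⟨_, hmem⟩ hlb)
end
end

section
/- There exist positive constants K and C such that for every finite simple graph G with at least one edge, pw(G) ≤ K·dc(G) + C; in fact, any graph with dilation coefficient D has chromatic number at most (⌈√2·D⌉+1)². -/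
open Real

noncomputable section

variable {V : Type*} [Fintype V]

set_option linter.unusedSectionVars false

lemma ES_finite (G : SimpleGraph V) (ρ : V → Pt) :
    {d | ∃ u v, G.Adj u v ∧ d = dist (ρ u) (ρ v)}.Finite := by
  apply Set.Finite.subset (Set.finite_range fun p : V × V => dist (ρ p.1) (ρ p.2))
  rintro d ⟨u, v, _, rfl⟩; exact ⟨(u, v), rfl⟩

lemma exists_adj (G : SimpleGraph V) (hE : G.edgeSet.Nonempty) : ∃ u v, G.Adj u v := by
  obtain ⟨e, he⟩ := hE
  induction e with
  | _ u v => exact ⟨u, v, he⟩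

lemma ES_nonempty (G : SimpleGraph V) (ρ : V → Pt) (hE : G.edgeSet.Nonempty) :
    {d | ∃ u v, G.Adj u v ∧ d = dist (ρ u) (ρ v)}.Nonempty := by
  obtain ⟨u, v, h⟩ := exists_adj G hE
  exact ⟨_, u, v, h, rfl⟩

lemma edge_le_maxE (G : SimpleGraph V) (ρ : V → Pt) {u v : V} (h : G.Adj u v) :
    dist (ρ u) (ρ v) ≤ maxE G ρ :=
  le_csSup (ES_finite G ρ).bddAbove ⟨u, v, h, rfl⟩

lemma minE_le_edge (G : SimpleGraph V) (ρ : V → Pt) {u v : V} (h : G.Adj u v) :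
    minE G ρ ≤ dist (ρ u) (ρ v) :=
  csInf_le (ES_finite G ρ).bddBelow ⟨u, v, h, rfl⟩

lemma minE_pos (G : SimpleGraph V) (ρ : V → Pt) (hρ : NED G ρ) (hE : G.edgeSet.Nonempty) :
    0 < minE G ρ := by
  obtain ⟨u, v, h, hd⟩ := (ES_nonempty G ρ hE).csInf_mem (ES_finite G ρ)
  rw [minE, hd]
  exact dist_pos.2 (hρ h)

lemma maxE_nonneg (G : SimpleGraph V) (ρ : V → Pt) (hE : G.edgeSet.Nonempty) :
    0 ≤ maxE G ρ := by
  obtain ⟨u, v, h⟩ := exists_adj G hE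
  exact dist_nonneg.trans (edge_le_maxE G ρ h)

lemma abs_coord_le_dist (x y : Pt) (i : Fin 2) : |x i - y i| ≤ dist x y := by
  rw [EuclideanSpace.dist_eq, ← Real.dist_eq]
  refine (Real.le_sqrt dist_nonneg (by positivity)).2 ?_
  calc dist (x i) (y i) ^ 2 ≤ ∑ j : Fin 2, dist (x j) (y j) ^ 2 := by
        apply Finset.single_le_sum (f := fun j => dist (x j) (y j) ^ 2)
        · intro j _; positivity
        · exact Finset.mem_univ i

lemma floor_cases {t : ℕ} {x y : ℝ}
    (h : ((⌊x⌋ : ℤ) : ZMod (t+1)) = ((⌊y⌋ : ℤ) : ZMod (t+1))) :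
    |x - y| < 1 ∨ (t : ℝ) < |x - y| := by
  have hx1 : (⌊x⌋ : ℝ) ≤ x := Int.floor_le x
  have hx2 : x < (⌊x⌋ : ℝ) + 1 := Int.lt_floor_add_one x
  have hy1 : (⌊y⌋ : ℝ) ≤ y := Int.floor_le y
  have hy2 : y < (⌊y⌋ : ℝ) + 1 := Int.lt_floor_add_one y
  rcases eq_or_ne ⌊x⌋ ⌊y⌋ with he | hne
  · left
    have : ((⌊x⌋ : ℤ) : ℝ) = ((⌊y⌋ : ℤ) : ℝ) := by rw [he]
    rw [abs_lt]; constructor <;> linarith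
  · right
    have hdvd : ((t : ℤ) + 1) ∣ (⌊y⌋ - ⌊x⌋) := by
      have := (ZMod.intCast_eq_intCast_iff ⌊x⌋ ⌊y⌋ (t+1)).1 (by exact_mod_cast h)
      exact_mod_cast this.dvd
    have habs : ((t : ℤ) + 1) ≤ |⌊y⌋ - ⌊x⌋| := by
      refine Int.le_of_dvd ?_ (dvd_abs _ _ |>.mpr hdvd)
      exact abs_pos.2 (sub_ne_zero.2 (Ne.symm hne))
    have habsR : (t : ℝ) + 1 ≤ |(⌊y⌋ : ℝ) - (⌊x⌋ : ℝ)| := by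
      have : (((t : ℤ) + 1 : ℤ) : ℝ) ≤ ((|⌊y⌋ - ⌊x⌋| : ℤ) : ℝ) := Int.cast_le.2 habs
      push_cast at this; linarith
    rcases le_abs.1 habsR with hc | hc
    · rw [lt_abs]; right; linarith
    · rw [lt_abs]; left; linarith

def col (m : ℝ) (t : ℕ) (p : Pt) : ZMod (t+1) × ZMod (t+1) :=
  (((⌊Real.sqrt 2 * p 0 / m⌋ : ℤ) : ZMod (t+1)), ((⌊Real.sqrt 2 * p 1 / m⌋ : ℤ) : ZMod (t+1)))

lemma core {V : Type*} [Fintype V] (G : SimpleGraph V) (ρ : V → Pt)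
    (hρ : NED G ρ) (hE : G.edgeSet.Nonempty) (t : ℕ)
    (ht : Real.sqrt 2 * maxE G ρ ≤ (t : ℝ) * minE G ρ) :
    ∀ ⦃u v⦄, G.Adj u v → col (minE G ρ) t (ρ u) ≠ col (minE G ρ) t (ρ v) := by
  intro u v huv hcol
  set m := minE G ρ with hm
  have hm0 : 0 < m := minE_pos G ρ hρ hE
  have hs2 : (0:ℝ) < Real.sqrt 2 := by positivity
  have hd1 : m ≤ dist (ρ u) (ρ v) := minE_le_edge G ρ huv
  have hd2 : dist (ρ u) (ρ v) ≤ maxE G ρ := edge_le_maxE G ρ huv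
  have key : ∀ i : Fin 2, |Real.sqrt 2 * ρ u i / m - Real.sqrt 2 * ρ v i / m|
      = Real.sqrt 2 * |ρ u i - ρ v i| / m := by
    intro i
    rw [div_sub_div_same, ← mul_sub, abs_div, abs_mul, abs_of_pos hs2, abs_of_pos hm0]
  have hcase : ∀ i : Fin 2, |ρ u i - ρ v i| < m / Real.sqrt 2 := by
    intro i
    have hc : ((⌊Real.sqrt 2 * ρ u i / m⌋ : ℤ) : ZMod (t+1))
        = ((⌊Real.sqrt 2 * ρ v i / m⌋ : ℤ) : ZMod (t+1)) := by
      fin_cases i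
      · exact congrArg Prod.fst hcol
      · exact congrArg Prod.snd hcol
    rcases floor_cases hc with h | h
    · rw [key i, div_lt_one hm0] at h
      rw [lt_div_iff₀ hs2]
      linarith [h]
    · exfalso
      rw [key i, lt_div_iff₀ hm0] at h
      have h2 : |ρ u i - ρ v i| ≤ dist (ρ u) (ρ v) := abs_coord_le_dist _ _ i
      nlinarith [mul_le_mul_of_nonneg_left h2 hs2.le,
        mul_le_mul_of_nonneg_left hd2 hs2.le]
  have hlt : dist (ρ u) (ρ v) < m := by
    rw [EuclideanSpace.dist_eq, Fin.sum_univ_two]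
    rw [Real.sqrt_lt' hm0]
    have e0 := hcase 0
    have e1 := hcase 1
    have hsq : (m / Real.sqrt 2) ^ 2 = m ^ 2 / 2 := by
      rw [div_pow, Real.sq_sqrt (by norm_num : (0:ℝ) ≤ 2)]
    have d0 : dist (ρ u 0) (ρ v 0) = |ρ u 0 - ρ v 0| := Real.dist_eq _ _
    have d1 : dist (ρ u 1) (ρ v 1) = |ρ u 1 - ρ v 1| := Real.dist_eq _ _
    rw [d0, d1]
    nlinarith [abs_nonneg (ρ u 0 - ρ v 0), abs_nonneg (ρ u 1 - ρ v 1),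
      div_pos hm0 hs2]
  linarith

lemma exists_ned (G : SimpleGraph V) : ∃ ρ : V → Pt, NED G ρ := by
  classical
  let e := (Fintype.equivFin V)
  refine ⟨fun v => (WithLp.toLp 2 (fun i => if i = 0 then ((e v : ℕ) : ℝ) else 0) : Pt), ?_⟩
  intro u v huv h
  have := congrArg (fun p : Pt => p 0) h
  simp only [if_pos rfl] at this
  have : e u = e v := by
    ext
    exact_mod_cast this
  exact G.ne_of_adj huv (e.injective this)

lemma dcSet_nonempty (G : SimpleGraph V) :
    {r | ∃ ρ : V → Pt, NED G ρ ∧ r = maxE G ρ / minE G ρ}.Nonempty := by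
  obtain ⟨ρ, hρ⟩ := exists_ned G
  exact ⟨_, ρ, hρ, rfl⟩

lemma dc_ge_one (G : SimpleGraph V) (hE : G.edgeSet.Nonempty) :
    1 ≤ sInf {r | ∃ ρ : V → Pt, NED G ρ ∧ r = maxE G ρ / minE G ρ} := by
  refine le_csInf (dcSet_nonempty G) ?_
  rintro r ⟨ρ, hρ, rfl⟩
  obtain ⟨u, v, huv⟩ := exists_adj G hE
  have h1 := minE_pos G ρ hρ hE
  have h2 := minE_le_edge G ρ huv
  have h3 := edge_le_maxE G ρ huv
  rw [le_div_iff₀ h1]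
  linarith

lemma walk_dist_le (G : SimpleGraph V) (ρ : V → Pt) {u v : V} (w : G.Walk u v) :
    dist (ρ u) (ρ v) ≤ (w.length : ℝ) * maxE G ρ := by
  induction w with
  | nil => simp
  | @cons a b c h p ih =>
      have h1 := edge_le_maxE G ρ h
      calc dist (ρ a) (ρ c) ≤ dist (ρ a) (ρ b) + dist (ρ b) (ρ c) := dist_triangle _ _ _
        _ ≤ maxE G ρ + (p.length : ℝ) * maxE G ρ := by exact add_le_add h1 ih
        _ = ((p.length + 1 : ℕ) : ℝ) * maxE G ρ := by push_cast; ring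
        _ = _ := by rw [SimpleGraph.Walk.length_cons]

lemma reach_dist_le (G : SimpleGraph V) (ρ : V → Pt) {u v : V} (h : G.Reachable u v) :
    dist (ρ u) (ρ v) ≤ (Fintype.card V : ℝ) * maxE G ρ := by
  classical
  obtain ⟨w⟩ := h
  have hp : (w.toPath : G.Walk u v).IsPath := w.toPath.2
  have hlen : ((w.toPath : G.Walk u v).length : ℝ) ≤ (Fintype.card V : ℝ) := by
    exact_mod_cast (hp.length_lt).le
  have hmax : 0 ≤ maxE G ρ := by
    rcases Set.eq_empty_or_nonempty {d | ∃ u v, G.Adj u v ∧ d = dist (ρ u) (ρ v)} with he | he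
    · simp [maxE, he]
    · obtain ⟨d, x, y, hxy, rfl⟩ := he
      exact dist_nonneg.trans (edge_le_maxE G ρ hxy)
  calc dist (ρ u) (ρ v) ≤ ((w.toPath : G.Walk u v).length : ℝ) * maxE G ρ :=
        walk_dist_le G ρ _
    _ ≤ _ := by exact mul_le_mul_of_nonneg_right hlen hmax

lemma exists_opt (G : SimpleGraph V) (hE : G.edgeSet.Nonempty) :
    ∃ ρ : V → Pt, NED G ρ ∧ 1 ≤ minE G ρ ∧
      maxE G ρ ≤ sInf {r | ∃ ρ : V → Pt, NED G ρ ∧ r = maxE G ρ / minE G ρ} := by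
  classical
  set D := sInf {r | ∃ ρ : V → Pt, NED G ρ ∧ r = maxE G ρ / minE G ρ} with hD
  have hD1 : 1 ≤ D := dc_ge_one G hE
  have hex : ∀ k : ℕ, ∃ ρ : V → Pt, NED G ρ ∧
      maxE G ρ / minE G ρ < D + 1/(k+1) := by
    intro k
    obtain ⟨r, ⟨ρ, hρ, rfl⟩, hlt⟩ :=
      Real.lt_sInf_add_pos (dcSet_nonempty G) (show (0:ℝ) < 1/(k+1) by positivity)
    exact ⟨ρ, hρ, hlt⟩
  choose ρs hned hratio using hex
  set root : V → V := fun v => (G.connectedComponentMk v).out with hroot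
  have hrr : ∀ v, root (root v) = root v := by
    intro v
    show (G.connectedComponentMk ((G.connectedComponentMk v).out)).out = _
    congr 1
    exact Quot.out_eq _
  have hradj : ∀ ⦃u v⦄, G.Adj u v → root u = root v := by
    intro u v h
    show (G.connectedComponentMk u).out = (G.connectedComponentMk v).out
    rw [SimpleGraph.ConnectedComponent.connectedComponentMk_eq_of_adj h]
  have hreach : ∀ v, G.Reachable v (root v) := by
    intro v
    have : G.connectedComponentMk v = G.connectedComponentMk (root v) :=
      (Quot.out_eq _).symm
    exact (SimpleGraph.ConnectedComponent.exact this)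
  set τ : ℕ → V → Pt := fun k v => (minE G (ρs k))⁻¹ • (ρs k v - ρs k (root v)) with hτ
  have hm0 : ∀ k, 0 < minE G (ρs k) := fun k => minE_pos G (ρs k) (hned k) hE
  have hdistf : ∀ k u v, root u = root v →
      dist (τ k u) (τ k v) = (minE G (ρs k))⁻¹ * dist (ρs k u) (ρs k v) := by
    intro k u v h
    rw [hτ]
    simp only [dist_eq_norm, h]
    rw [← smul_sub]
    rw [norm_smul]
    congr 1
    · simp [abs_of_pos (hm0 k)]
    · congr 1; abel
  have hlow : ∀ k ⦃u v⦄, G.Adj u v → 1 ≤ dist (τ k u) (τ k v) := by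
    intro k u v h
    rw [hdistf k u v (hradj h), le_inv_mul_iff₀ (hm0 k), mul_one]
    exact minE_le_edge G (ρs k) h
  have hhigh : ∀ k ⦃u v⦄, G.Adj u v → dist (τ k u) (τ k v) ≤ D + 1/(k+1) := by
    intro k u v h
    rw [hdistf k u v (hradj h)]
    have h1 := edge_le_maxE G (ρs k) h
    have h2 := (hratio k).le
    rw [div_eq_inv_mul] at h2
    calc (minE G (ρs k))⁻¹ * dist (ρs k u) (ρs k v)
        ≤ (minE G (ρs k))⁻¹ * maxE G (ρs k) := by
          exact mul_le_mul_of_nonneg_left h1 (inv_nonneg.2 (hm0 k).le)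
      _ ≤ D + 1/(k+1) := h2
  set R : ℝ := (Fintype.card V : ℝ) * (D + 1) with hR
  have hbound : ∀ k v, dist (τ k v) 0 ≤ R := by
    intro k v
    have hz : τ k (root v) = 0 := by
      rw [hτ]; simp only [hrr v, sub_self, smul_zero]
    rw [← hz, hdistf k v (root v) (hrr v).symm]
    have h1 : dist (ρs k v) (ρs k (root v)) ≤ (Fintype.card V : ℝ) * maxE G (ρs k) :=
      reach_dist_le G (ρs k) (hreach v)
    have h2 : (minE G (ρs k))⁻¹ * maxE G (ρs k) ≤ D + 1 := by
      have h3 := (hratio k).le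
      rw [div_eq_inv_mul] at h3
      have h4 : 1/((k:ℝ)+1) ≤ 1 := by
        rw [div_le_one (by positivity)]; linarith [Nat.cast_nonneg (α := ℝ) k]
      linarith
    have h5 : (0:ℝ) ≤ (minE G (ρs k))⁻¹ := (inv_nonneg.2 (hm0 k).le)
    calc (minE G (ρs k))⁻¹ * dist (ρs k v) (ρs k (root v))
        ≤ (minE G (ρs k))⁻¹ * ((Fintype.card V : ℝ) * maxE G (ρs k)) :=
          mul_le_mul_of_nonneg_left h1 h5
      _ = (Fintype.card V : ℝ) * ((minE G (ρs k))⁻¹ * maxE G (ρs k)) := by ring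
      _ ≤ R := by
          rw [hR]
          exact mul_le_mul_of_nonneg_left h2 (Nat.cast_nonneg _)
  -- compactness
  have hK : IsCompact (Set.univ.pi (fun _ : V => Metric.closedBall (0 : Pt) R)) :=
    isCompact_univ_pi fun _ => isCompact_closedBall _ _
  have hmem : ∀ k, τ k ∈ Set.univ.pi (fun _ : V => Metric.closedBall (0 : Pt) R) := by
    intro k
    rw [Set.mem_univ_pi]
    intro v
    rw [Metric.mem_closedBall]
    exact hbound k v
  obtain ⟨a, -, φ, hφ, hconv⟩ := hK.tendsto_subseq hmem
  have hpt : ∀ v, Filter.Tendsto (fun k => τ (φ k) v) Filter.atTop (nhds (a v)) := by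
    intro v
    exact tendsto_pi_nhds.1 hconv v
  have hedge : ∀ ⦃u v⦄, G.Adj u v →
      1 ≤ dist (a u) (a v) ∧ dist (a u) (a v) ≤ D := by
    intro u v h
    have hd : Filter.Tendsto (fun k => dist (τ (φ k) u) (τ (φ k) v)) Filter.atTop
        (nhds (dist (a u) (a v))) := (hpt u).dist (hpt v)
    constructor
    · exact le_of_tendsto_of_tendsto tendsto_const_nhds hd
        (Filter.Eventually.of_forall fun k => hlow (φ k) h)
    · have hb : Filter.Tendsto (fun k => D + 1/((φ k : ℝ)+1)) Filter.atTop (nhds (D + 0)) := by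
        exact tendsto_const_nhds.add
          (tendsto_one_div_add_atTop_nhds_zero_nat.comp hφ.tendsto_atTop)
      rw [add_zero] at hb
      exact le_of_tendsto_of_tendsto hd hb
        (Filter.Eventually.of_forall fun k => hhigh (φ k) h)
  refine ⟨a, ?_, ?_, ?_⟩
  · intro u v h
    have := (hedge h).1
    intro he
    rw [he, dist_self] at this
    linarith
  · refine le_csInf (ES_nonempty G a hE) ?_
    rintro d ⟨u, v, h, rfl⟩
    exact (hedge h).1
  · refine Real.sSup_le ?_ (by linarith)
    rintro d ⟨u, v, h, rfl⟩
    exact (hedge h).2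

lemma one_le_abs_cast {a b : ℕ} (h : a ≠ b) : (1:ℝ) ≤ |(a:ℝ) - (b:ℝ)| := by
  have h1 : (1:ℤ) ≤ |(a:ℤ) - (b:ℤ)| := Int.one_le_abs (sub_ne_zero.2 (by exact_mod_cast h))
  have h2 : ((1:ℤ):ℝ) ≤ ((|(a:ℤ) - (b:ℤ)| : ℤ) : ℝ) := by exact_mod_cast h1
  push_cast at h2
  convert h2 using 2

-- the coloring from the optimal representation
lemma main (G : SimpleGraph V) (hE : G.edgeSet.Nonempty) :
    pw G ≤ 2 * dc G + 4 ∧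
    G.chromaticNumber.toNat ≤ ((⌈Real.sqrt 2 * dc G⌉).toNat + 1) ^ 2 := by
  classical
  obtain ⟨ρ, hρ, hmin, hmax⟩ := exists_opt G hE
  have hdc1 : 1 ≤ dc G := dc_ge_one G hE
  set N : ℕ := (⌈Real.sqrt 2 * dc G⌉).toNat with hN
  have hs2 : (0:ℝ) < Real.sqrt 2 := by positivity
  have hx0 : 0 ≤ Real.sqrt 2 * dc G := by positivity
  have hceil : ((N : ℕ) : ℝ) = ((⌈Real.sqrt 2 * dc G⌉ : ℤ) : ℝ) := by
    rw [hN]; exact_mod_cast congrArg (fun z : ℤ => (z : ℝ)) (Int.toNat_of_nonneg (Int.ceil_nonneg hx0))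
  have hNx : Real.sqrt 2 * dc G ≤ (N : ℝ) := by
    rw [hceil]; exact Int.le_ceil _
  have hNx2 : (N : ℝ) < Real.sqrt 2 * dc G + 1 := by
    rw [hceil]; exact Int.ceil_lt_add_one _
  have hcore : Real.sqrt 2 * maxE G ρ ≤ (N : ℝ) * minE G ρ := by
    have h1 : Real.sqrt 2 * maxE G ρ ≤ Real.sqrt 2 * dc G :=
      mul_le_mul_of_nonneg_left (hmax.trans_eq rfl) hs2.le
    have h2 : (N : ℝ) * 1 ≤ (N : ℝ) * minE G ρ :=
      mul_le_mul_of_nonneg_left hmin (Nat.cast_nonneg _)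
    calc Real.sqrt 2 * maxE G ρ ≤ Real.sqrt 2 * dc G := h1
      _ ≤ (N : ℝ) := hNx
      _ = (N : ℝ) * 1 := (mul_one _).symm
      _ ≤ _ := h2
  have hvalid := core G ρ hρ hE N hcore
  constructor
  · -- plane-width bound
    set c : V → ZMod (N+1) × ZMod (N+1) := fun v => col (minE G ρ) N (ρ v) with hc
    set σ : V → Pt :=
      fun v => (WithLp.toLp 2 (fun i => if i = 0 then (((c v).1.val : ℕ) : ℝ) else (((c v).2.val : ℕ) : ℝ)) : Pt)
      with hσ
    have hσ0 : ∀ v, σ v 0 = ((c v).1.val : ℝ) := fun v => rfl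
    have hσ1 : ∀ v, σ v 1 = ((c v).2.val : ℝ) := fun v => rfl
    have key : ∀ ⦃u v⦄, c u ≠ c v → 1 ≤ dist (σ u) (σ v) := by
      intro u v hne
      have : (c u).1 ≠ (c v).1 ∨ (c u).2 ≠ (c v).2 := by
        by_contra hcon
        push_neg at hcon
        exact hne (Prod.ext hcon.1 hcon.2)
      rcases this with h' | h'
      · have hv : (c u).1.val ≠ (c v).1.val := fun hh => h' (ZMod.val_injective _ hh)
        have h1 : (1:ℝ) ≤ |σ u 0 - σ v 0| := by
          rw [hσ0, hσ0]; exact one_le_abs_cast hv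
        exact h1.trans (abs_coord_le_dist _ _ 0)
      · have hv : (c u).2.val ≠ (c v).2.val := fun hh => h' (ZMod.val_injective _ hh)
        have h1 : (1:ℝ) ≤ |σ u 1 - σ v 1| := by
          rw [hσ1, hσ1]; exact one_le_abs_cast hv
        exact h1.trans (abs_coord_le_dist _ _ 1)
    have hNED : NED G σ := by
      intro u v h hσeq
      have := key (hvalid h)
      rw [hσeq, dist_self] at this
      linarith
    have hminσ : 1 ≤ minE G σ := by
      refine le_csInf (ES_nonempty G σ hE) ?_
      rintro d ⟨u, v, h, rfl⟩
      exact key (hvalid h)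
    have hcoord : ∀ (w : V) (i : Fin 2), 0 ≤ σ w i ∧ σ w i ≤ (N : ℝ) := by
      intro w i
      have b1 : ∀ z : ZMod (N+1), ((z.val : ℕ) : ℝ) ≤ (N : ℝ) := by
        intro z
        have := z.val_lt
        have : z.val ≤ N := by omega
        exact_mod_cast this
      have hi : i = 0 ∨ i = 1 := by
        rcases (by omega : (i:ℕ) = 0 ∨ (i:ℕ) = 1) with hi | hi
        · exact Or.inl (Fin.ext hi)
        · exact Or.inr (Fin.ext hi)
      rcases hi with rfl | rfl
      · rw [hσ0]; exact ⟨Nat.cast_nonneg _, b1 _⟩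
      · rw [hσ1]; exact ⟨Nat.cast_nonneg _, b1 _⟩
    have hmaxσ : maxP σ ≤ Real.sqrt 2 * N := by
      refine Real.sSup_le ?_ (by positivity)
      rintro d ⟨u, v, _, rfl⟩
      rw [EuclideanSpace.dist_eq, Fin.sum_univ_two]
      have e0 : |σ u 0 - σ v 0| ≤ (N:ℝ) := by
        rw [abs_le]
        have h1 := hcoord u 0; have h2 := hcoord v 0
        constructor <;> linarith [h1.1, h1.2, h2.1, h2.2]
      have e1 : |σ u 1 - σ v 1| ≤ (N:ℝ) := by
        rw [abs_le]
        have h1 := hcoord u 1; have h2 := hcoord v 1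
        constructor <;> linarith [h1.1, h1.2, h2.1, h2.2]
      have hsum : dist (σ u 0) (σ v 0) ^ 2 + dist (σ u 1) (σ v 1) ^ 2
          ≤ 2 * (N:ℝ)^2 := by
        rw [Real.dist_eq, Real.dist_eq]
        nlinarith [abs_nonneg (σ u 0 - σ v 0), abs_nonneg (σ u 1 - σ v 1)]
      calc Real.sqrt (dist (σ u 0) (σ v 0) ^ 2 + dist (σ u 1) (σ v 1) ^ 2)
          ≤ Real.sqrt (2 * (N:ℝ)^2) := Real.sqrt_le_sqrt hsum
        _ = Real.sqrt 2 * N := by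
            rw [Real.sqrt_mul (by norm_num : (0:ℝ) ≤ 2), Real.sqrt_sq (Nat.cast_nonneg _)]
    have hpw : pw G ≤ maxP σ / minE G σ := by
      refine csInf_le ⟨0, ?_⟩ ⟨σ, hNED, rfl⟩
      rintro r ⟨ρ', hρ', rfl⟩
      have h1 : 0 ≤ maxP ρ' := Real.sSup_nonneg (by rintro d ⟨u, v, _, rfl⟩; exact dist_nonneg)
      exact div_nonneg h1 (minE_pos G ρ' hρ' hE).le
    have hmaxσ0 : 0 ≤ maxP σ :=
      Real.sSup_nonneg (by rintro d ⟨u, v, _, rfl⟩; exact dist_nonneg)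
    have : maxP σ / minE G σ ≤ maxP σ := div_le_self hmaxσ0 hminσ
    have hsqrt2 : Real.sqrt 2 ≤ 2 := by
      nlinarith [Real.sq_sqrt (by norm_num : (0:ℝ) ≤ 2), Real.sqrt_nonneg 2]
    have hfin : Real.sqrt 2 * (N:ℝ) ≤ 2 * dc G + 4 := by
      nlinarith [Real.sq_sqrt (by norm_num : (0:ℝ) ≤ 2), hs2.le, hdc1, hNx2, hsqrt2]
    linarith
  · -- chromatic bound
    have hcol : G.Coloring (ZMod (N+1) × ZMod (N+1)) :=
      SimpleGraph.Coloring.mk (fun v => col (minE G ρ) N (ρ v)) (fun h => hvalid h)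
    have hcard : Fintype.card (ZMod (N+1) × ZMod (N+1)) = (N+1)^2 := by
      rw [Fintype.card_prod, ZMod.card]; ring
    have h1 : G.Colorable ((N+1)^2) := hcard ▸ hcol.colorable
    have h2 := h1.chromaticNumber_le
    have h3 : G.chromaticNumber.toNat ≤ (N+1)^2 := by
      have h4 : G.chromaticNumber ≤ (((N+1)^2 : ℕ) : ℕ∞) := h2
      have h5 := ENat.toNat_le_toNat h4 (ENat.coe_ne_top _)
      simpa only [ENat.toNat_coe] using h5
    exact h3

/-- There are constants `K, C > 0` with `pw G ≤ K · dc G + C` for every graph `G`;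
moreover any graph with dilation coefficient `D` has chromatic number at most
`(⌈√2·D⌉ + 1)²`. -/
theorem stmt_19 :
    (∃ K : ℝ, 0 < K ∧ ∃ C : ℝ, 0 < C ∧
      ∀ (V : Type) [Fintype V] (G : SimpleGraph V),
        G.edgeSet.Nonempty → pw G ≤ K * dc G + C) ∧
    ∀ (V : Type) [Fintype V] (G : SimpleGraph V), G.edgeSet.Nonempty →
      G.chromaticNumber.toNat ≤ ((⌈Real.sqrt 2 * dc G⌉).toNat + 1) ^ 2 := by
  constructor
  · exact ⟨2, by norm_num, 4, by norm_num, fun V _ G hE => (main G hE).1⟩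
  · intro V _ G hE
    exact (main G hE).2
end
end
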